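/- arXiv:1602.00703 — 4 statements merged into one kernel-verified Lean document; each statement's English description precedes it below -/
import Mathlib

section
/- Let H be a Hermitian positive semidefinite d×d complex matrix, Δ > 0, and v a unit vector in ℂ^d such that H v = 0 and ⟨w, H w⟩ ≥ Δ‖w‖² for every vector w orthogonal to v; write ‖H‖ for the operator norm of H and assume ‖H‖ ≥ Δ. Let F_T < 1 and ε > 0, and set δ = (1 − F_T)(1 − Δ/‖H‖) + 2εΔ/‖H‖. Let ρ be a density matrix on ℂ^d with fidelity F = ⟨v, ρ v⟩ satisfying F ≥ F_T + δ. Then the fidelity lower bound F_min = 1 − Tr[Hρ]/Δ satisfies F_min ≥ F_T + 2ε. (Deterministic completeness of the certification protocol.) -/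
open Matrix
open scoped ComplexOrder

/-- The operator norm (largest singular value) of a complex matrix. -/
noncomputable def opNorm {d : ℕ} (A : Matrix (Fin d) (Fin d) ℂ) : ℝ :=
  ‖Matrix.toEuclideanCLM (𝕜 := ℂ) A‖

lemma quad_bound {d : ℕ} (H : Matrix (Fin d) (Fin d) ℂ) (x : Fin d → ℂ) :
    (star x ⬝ᵥ (H *ᵥ x)).re ≤ opNorm H * (star x ⬝ᵥ x).re := by
  set T := Matrix.toEuclideanCLM (𝕜 := ℂ) H
  set x' : EuclideanSpace ℂ (Fin d) := (WithLp.equiv 2 _).symm x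
  have h1 : (inner ℂ x' (T x') : ℂ) = star x ⬝ᵥ (H *ᵥ x) := by
    rw [show T x' = (WithLp.equiv 2 _).symm (H *ᵥ x) from rfl,
      ]
    exact dotProduct_comm _ _
  have h2 : (inner ℂ x' x' : ℂ) = star x ⬝ᵥ x := by
    exact dotProduct_comm _ _
  have h3 : ((inner ℂ x' (T x') : ℂ)).re ≤ ‖x'‖ * ‖T x'‖ := by
    calc ((inner ℂ x' (T x') : ℂ)).re ≤ ‖(inner ℂ x' (T x') : ℂ)‖ := Complex.re_le_norm _
      _ ≤ ‖x'‖ * ‖T x'‖ := norm_inner_le_norm _ _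
  have h4 : ‖T x'‖ ≤ ‖T‖ * ‖x'‖ := T.le_opNorm x'
  have h5 : ((inner ℂ x' x' : ℂ)).re = ‖x'‖ ^ 2 := by
    simpa using inner_self_eq_norm_sq (𝕜 := ℂ) x'
  rw [← h1, ← h2, h5]
  have hT : opNorm H = ‖T‖ := rfl
  rw [hT]
  have := norm_nonneg x'
  nlinarith [norm_nonneg (T x')]

lemma trace_mul_le {d : ℕ} (H : Matrix (Fin d) (Fin d) ℂ)
    {σ : Matrix (Fin d) (Fin d) ℂ} (hσ : σ.PosSemidef) :
    ((H * σ).trace).re ≤ opNorm H * (σ.trace).re := by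
  obtain ⟨B, rfl⟩ : ∃ B : Matrix (Fin d) (Fin d) ℂ, σ = Bᴴ * B := by
    open scoped MatrixOrder in
    obtain ⟨B, hB⟩ := CStarAlgebra.nonneg_iff_eq_star_mul_self.mp hσ.nonneg
    exact ⟨B, hB⟩
  have h1 : (H * (Bᴴ * B)).trace = (B * H * Bᴴ).trace := by
    rw [← Matrix.mul_assoc, Matrix.trace_mul_comm, ← Matrix.mul_assoc]
  have h2 : (Bᴴ * B).trace = (B * Bᴴ).trace := Matrix.trace_mul_comm _ _
  rw [h1, h2, Matrix.trace, Matrix.trace]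
  simp only [Complex.re_sum, Finset.mul_sum]
  apply Finset.sum_le_sum
  intro i _
  have key1 : (B * H * Bᴴ).diag i = star (star (B i)) ⬝ᵥ (H *ᵥ star (B i)) := by
    simp [Matrix.diag, Matrix.mul_apply, Matrix.conjTranspose_apply, dotProduct,
      Matrix.mulVec, Finset.mul_sum, Finset.sum_mul]
    rw [Finset.sum_comm]
    congr 1; ext j; congr 1; ext k; ring
  have key2 : (B * Bᴴ).diag i = star (star (B i)) ⬝ᵥ (star (B i)) := by
    simp [Matrix.diag, Matrix.mul_apply, Matrix.conjTranspose_apply, dotProduct]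
  rw [key1, key2]
  exact quad_bound H _

/-- Deterministic completeness of the certification protocol. If the
fidelity `F = ⟨v, ρ v⟩` of the density matrix `ρ` with the unique ground state `v` of
the PSD Hamiltonian `H` (gap `≥ Δ`, `‖H‖ ≥ Δ`) satisfies `F ≥ F_T + δ` with
`δ = (1 - F_T)(1 - Δ/‖H‖) + 2εΔ/‖H‖`, then `F_min = 1 - Tr[Hρ]/Δ ≥ F_T + 2ε`. -/
theorem certification_completeness {d : ℕ} (H : Matrix (Fin d) (Fin d) ℂ)
    (hH : H.PosSemidef) (Δ : ℝ) (hΔ : 0 < Δ) (v : Fin d → ℂ)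
    (hv : star v ⬝ᵥ v = 1) (hground : H *ᵥ v = 0)
    (hgap : ∀ w : Fin d → ℂ, star v ⬝ᵥ w = 0 →
      Δ * (star w ⬝ᵥ w).re ≤ (star w ⬝ᵥ (H *ᵥ w)).re)
    (hnorm : Δ ≤ opNorm H)
    (F_T ε : ℝ) (hFT : F_T < 1) (hε : 0 < ε)
    (ρ : Matrix (Fin d) (Fin d) ℂ) (hρ : ρ.PosSemidef) (hρtr : ρ.trace = 1)
    (hF : (star v ⬝ᵥ (ρ *ᵥ v)).re ≥
      F_T + ((1 - F_T) * (1 - Δ / opNorm H) + 2 * ε * Δ / opNorm H)) :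
    1 - ((H * ρ).trace).re / Δ ≥ F_T + 2 * ε := by
  set nH := opNorm H with hnH
  have hnHpos : 0 < nH := lt_of_lt_of_le hΔ hnorm
  set P : Matrix (Fin d) (Fin d) ℂ := vecMulVec v (star v) with hP
  set Q : Matrix (Fin d) (Fin d) ℂ := 1 - P with hQ
  -- P is Hermitian, and H * P = 0, P * H = 0
  have hPherm : P.IsHermitian := by
    ext i j
    simp [hP, Matrix.conjTranspose_apply, vecMulVec_apply, mul_comm]
  have hHP : H * P = 0 := by
    ext i j
    simp only [Matrix.mul_apply, hP, vecMulVec_apply, Matrix.zero_apply, ← mul_assoc]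
    rw [← Finset.sum_mul]
    have h : ∑ k, H i k * v k = (H *ᵥ v) i := rfl
    rw [h, hground]
    simp
  have hPH : P * H = 0 := by
    have : Pᴴ * Hᴴ = 0 := by
      rw [← Matrix.conjTranspose_mul, hHP]; simp
    rwa [hPherm.eq, hH.1.eq] at this
  -- P * P = P
  have hPP : P * P = P := by
    ext i j
    simp only [Matrix.mul_apply, hP, vecMulVec_apply]
    have : ∑ k, v i * star v k * (v k * star v j)
        = v i * star v j * (star v ⬝ᵥ v) := by
      simp [dotProduct, Finset.mul_sum]; congr 1; ext k; ring
    rw [this, hv, mul_one]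
  -- σ := Q ρ Q is PSD
  have hQherm : Qᴴ = Q := by
    simp [hQ, Matrix.conjTranspose_sub, hPherm.eq]
  set σ : Matrix (Fin d) (Fin d) ℂ := Q * ρ * Q with hσdef
  have hσ : σ.PosSemidef := by
    have := hρ.mul_mul_conjTranspose_same Q
    rwa [hQherm] at this
  -- trace (H σ) = trace (H ρ)
  have hQHQ : Q * H * Q = H := by
    simp only [hQ, Matrix.sub_mul, Matrix.mul_sub, Matrix.one_mul, Matrix.mul_one,
      hPH, hHP]
    simp
  have htrHσ : (H * σ).trace = (H * ρ).trace := by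
    have he : H * σ = H * Q * ρ * Q := by
      rw [hσdef, ← Matrix.mul_assoc, ← Matrix.mul_assoc]
    rw [he, Matrix.trace_mul_comm, ← Matrix.mul_assoc, ← Matrix.mul_assoc, hQHQ]
  -- trace σ = 1 - F where F = star v ⬝ᵥ ρ *ᵥ v
  have htrPρ : (ρ * P).trace = star v ⬝ᵥ (ρ *ᵥ v) := by
    rw [Matrix.trace]
    simp only [Matrix.diag, Matrix.mul_apply, hP, vecMulVec_apply, dotProduct,
      Matrix.mulVec, Finset.mul_sum]
    congr 1; ext i; congr 1; ext j
    simp [dotProduct]; ring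
  have hQQ : Q * Q = Q := by
    simp only [hQ, Matrix.sub_mul, Matrix.mul_sub, Matrix.one_mul, Matrix.mul_one, hPP]
    abel
  have htrσ : σ.trace = 1 - star v ⬝ᵥ (ρ *ᵥ v) := by
    have h1 : σ.trace = (Q * Q * ρ).trace := by
      rw [hσdef, Matrix.trace_mul_cycle, Matrix.mul_assoc]
    rw [h1, hQQ, hQ, Matrix.sub_mul, Matrix.one_mul, Matrix.trace_sub, hρtr,
      Matrix.trace_mul_comm, htrPρ]
  -- main bound
  have hbound : ((H * ρ).trace).re ≤ nH * (1 - (star v ⬝ᵥ (ρ *ᵥ v)).re) := by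
    have := trace_mul_le H hσ
    rw [htrHσ, htrσ] at this
    simpa using this
  set F := (star v ⬝ᵥ (ρ *ᵥ v)).re with hFdef
  have h3 : 1 - F ≤ (1 - F_T - 2 * ε) * (Δ / nH) := by
    have hd : (0:ℝ) < Δ / nH := div_pos hΔ hnHpos
    have hF' : F ≥ F_T + ((1 - F_T) * (1 - Δ / nH) + 2 * ε * Δ / nH) := hF
    have he : 2 * ε * Δ / nH = 2 * ε * (Δ / nH) := by ring
    rw [he] at hF'
    nlinarith [hF']
  have h2 : nH * (1 - F) ≤ (1 - F_T - 2 * ε) * Δ := by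
    have := mul_le_mul_of_nonneg_left h3 (le_of_lt hnHpos)
    calc nH * (1 - F) ≤ nH * ((1 - F_T - 2 * ε) * (Δ / nH)) := this
      _ = (1 - F_T - 2 * ε) * Δ := by field_simp
  have key : ((H * ρ).trace).re / Δ ≤ 1 - F_T - 2 * ε := by
    rw [div_le_iff₀ hΔ]
    linarith
  linarith
end

section
/- Let H be a Hermitian positive semidefinite d×d complex matrix, Δ > 0, and v a unit vector in ℂ^d such that H v = 0 and ⟨w, H w⟩ ≥ Δ‖w‖² for every vector w orthogonal to v; write ‖H‖ for the operator norm of H and assume ‖H‖ ≥ Δ. Fix a threshold fidelity F_T < 1, an estimation error ε > 0 and a failure probability α ∈ (0,1); set δ = (1 − F_T)(1 − Δ/‖H‖) + 2εΔ/‖H‖. Let ρ be a density matrix on ℂ^d with fidelity F = ⟨v, ρ v⟩, let F_min = 1 − Tr[Hρ]/Δ, and let F* : Ω → ℝ be a random variable on a probability space (Ω, P) satisfying P[|F* − F_min| ≤ ε] ≥ 1 − α. If F ≥ F_T + δ, then P[F* ≥ F_T + ε] ≥ 1 − α, i.e., the test that accepts when F* ≥ F_T + ε accepts ρ with probability at least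 1 − α. -/
open Matrix MeasureTheory
open scoped ComplexOrder

lemma quad_re_le_opNorm {d : ℕ} (H : Matrix (Fin d) (Fin d) ℂ) (u : Fin d → ℂ) :
    (star u ⬝ᵥ (H *ᵥ u)).re ≤ opNorm H * (star u ⬝ᵥ u).re := by
  set T := Matrix.toEuclideanCLM (𝕜 := ℂ) H
  set x : EuclideanSpace ℂ (Fin d) := (WithLp.equiv 2 _).symm u with hx
  have h1 : star u ⬝ᵥ (H *ᵥ u) = inner ℂ x (T x) := by
    rw [dotProduct_comm]; rfl
  have h2 : (star u ⬝ᵥ u) = (inner ℂ x x : ℂ) := by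
    rw [dotProduct_comm]; rfl
  rw [h1, h2]
  have h3 : (inner ℂ x (T x) : ℂ).re ≤ ‖(inner ℂ x (T x) : ℂ)‖ := Complex.re_le_norm _
  have h4 : ‖(inner ℂ x (T x) : ℂ)‖ ≤ ‖x‖ * ‖T x‖ := norm_inner_le_norm _ _
  have h5 : ‖T x‖ ≤ ‖T‖ * ‖x‖ := T.le_opNorm x
  have h6 : ((inner ℂ x x : ℂ)).re = ‖x‖ ^ 2 := by
    exact_mod_cast inner_self_eq_norm_sq (𝕜 := ℂ) x
  rw [h6]
  have : opNorm H = ‖T‖ := rfl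
  rw [this]
  nlinarith [norm_nonneg x, norm_nonneg T]

lemma trace_re_nonneg_of_quad {d : ℕ} (N ρ : Matrix (Fin d) (Fin d) ℂ)
    (hρ : ρ.PosSemidef) (h : ∀ w : Fin d → ℂ, 0 ≤ (star w ⬝ᵥ (N *ᵥ w)).re) :
    0 ≤ ((N * ρ).trace).re := by
  obtain ⟨C, hC⟩ : ∃ C : Matrix (Fin d) (Fin d) ℂ, ρ = Cᴴ * C := by
    open scoped MatrixOrder in
    simpa [Matrix.star_eq_conjTranspose] using CStarAlgebra.nonneg_iff_eq_star_mul_self.mp hρ.nonneg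
  have htr : (N * ρ).trace = (C * (N * Cᴴ)).trace := by
    rw [hC, ← Matrix.mul_assoc, Matrix.trace_mul_comm]
  rw [htr, Matrix.trace]
  rw [Complex.re_sum]
  apply Finset.sum_nonneg
  intro i _
  have key : (C * (N * Cᴴ)).diag i = star (star (C i)) ⬝ᵥ (N *ᵥ star (C i)) := by
    simp only [Matrix.diag_apply, Matrix.mul_apply, Matrix.mulVec, dotProduct,
      Matrix.conjTranspose_apply, Pi.star_apply, star_star, Finset.mul_sum]
  rw [key]
  exact h _

lemma trace_vecMulVec_mul {d : ℕ} (v : Fin d → ℂ) (ρ : Matrix (Fin d) (Fin d) ℂ) :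
    (Matrix.vecMulVec v (star v) * ρ).trace = star v ⬝ᵥ (ρ *ᵥ v) := by
  simp only [Matrix.trace, Matrix.diag_apply, Matrix.mul_apply, Matrix.vecMulVec_apply,
    Matrix.mulVec, dotProduct, Pi.star_apply, Finset.mul_sum]
  rw [Finset.sum_comm]
  congr 1; ext j; congr 1; ext i; ring

lemma quadN_nonneg {d : ℕ} (H : Matrix (Fin d) (Fin d) ℂ) (hH : H.IsHermitian)
    (v : Fin d → ℂ) (hv : star v ⬝ᵥ v = 1) (hground : H *ᵥ v = 0) (w : Fin d → ℂ) :
    0 ≤ (star w ⬝ᵥ ((((opNorm H : ℂ) • (1 - Matrix.vecMulVec v (star v)) - H)) *ᵥ w)).re := by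
  set c := star v ⬝ᵥ w with hc
  set u := w - c • v with hu
  have hw : w = u + c • v := by rw [hu]; abel
  have hsw : star w = star u + star c • star v := by
    rw [hw, star_add, star_smul]
  have hvH : star v ᵥ* H = 0 := by
    have h0 := congrArg star hground
    rwa [Matrix.star_mulVec, hH.eq, star_zero] at h0
  have hHw : H *ᵥ w = H *ᵥ u := by
    rw [hu, Matrix.mulVec_sub, Matrix.mulVec_smul, hground, smul_zero, sub_zero]
  have hvu : star v ⬝ᵥ u = 0 := by
    rw [hu, dotProduct_sub, dotProduct_smul, hv, ← hc]
    simp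
  have huv : star u ⬝ᵥ v = 0 := by
    rw [Matrix.star_dotProduct, hvu, star_zero]
  have hvHu : star v ⬝ᵥ (H *ᵥ u) = 0 := by
    rw [Matrix.dotProduct_mulVec, hvH, zero_dotProduct]
  have hwHw : star w ⬝ᵥ (H *ᵥ w) = star u ⬝ᵥ (H *ᵥ u) := by
    rw [hHw, hsw, add_dotProduct, smul_dotProduct, hvHu, smul_zero, add_zero]
  have hww : star w ⬝ᵥ w = star u ⬝ᵥ u + star c * c := by
    nth_rewrite 2 [hw]
    rw [hsw, add_dotProduct, dotProduct_add, dotProduct_add,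
      dotProduct_smul, huv, smul_dotProduct, hvu,
      smul_dotProduct, dotProduct_smul, hv]
    simp [smul_eq_mul]
  have hPw : Matrix.vecMulVec v (star v) *ᵥ w = c • v := by
    ext i
    simp only [Matrix.mulVec, Matrix.vecMulVec_apply, dotProduct, Pi.smul_apply,
      smul_eq_mul, hc]
    rw [Finset.sum_mul]
    exact Finset.sum_congr rfl (fun j _ => by ring)
  have hwv : star w ⬝ᵥ v = star c := by
    rw [Matrix.star_dotProduct, ← hc]
  have hwPw : star w ⬝ᵥ (Matrix.vecMulVec v (star v) *ᵥ w) = star c * c := by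
    rw [hPw, dotProduct_smul, hwv, smul_eq_mul]
    ring
  have expand : star w ⬝ᵥ ((((opNorm H : ℂ) • (1 - Matrix.vecMulVec v (star v)) - H)) *ᵥ w)
      = (opNorm H : ℂ) * (star u ⬝ᵥ u) - star u ⬝ᵥ (H *ᵥ u) := by
    rw [Matrix.sub_mulVec, Matrix.smul_mulVec, Matrix.sub_mulVec, Matrix.one_mulVec,
      dotProduct_sub, dotProduct_smul, dotProduct_sub,
      hwPw, hww, hwHw, smul_eq_mul]
    ring
  rw [expand]
  have h1 := quad_re_le_opNorm H u
  have h2 : ((opNorm H : ℂ) * (star u ⬝ᵥ u)).re = opNorm H * (star u ⬝ᵥ u).re := by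
    simp [Complex.mul_re]
  simp only [Complex.sub_re, h2]
  linarith


/-- Probabilistic completeness of the certification protocol. Under the
assumptions of Statement 7, if the random estimate `F*` of `F_min = 1 - Tr[Hρ]/Δ`
satisfies `P[|F* - F_min| ≤ ε] ≥ 1 - α`, and `F = ⟨v, ρ v⟩ ≥ F_T + δ`, then the test
accepts with probability at least `1 - α`: `P[F* ≥ F_T + ε] ≥ 1 - α`. -/
theorem certification_completeness_prob {d : ℕ} (H : Matrix (Fin d) (Fin d) ℂ)
    (hH : H.PosSemidef) (Δ : ℝ) (hΔ : 0 < Δ) (v : Fin d → ℂ)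
    (hv : star v ⬝ᵥ v = 1) (hground : H *ᵥ v = 0)
    (hgap : ∀ w : Fin d → ℂ, star v ⬝ᵥ w = 0 →
      Δ * (star w ⬝ᵥ w).re ≤ (star w ⬝ᵥ (H *ᵥ w)).re)
    (hnorm : Δ ≤ opNorm H)
    (F_T ε α : ℝ) (hFT : F_T < 1) (hε : 0 < ε) (hα : α ∈ Set.Ioo (0 : ℝ) 1)
    (ρ : Matrix (Fin d) (Fin d) ℂ) (hρ : ρ.PosSemidef) (hρtr : ρ.trace = 1)
    {Ω : Type*} [MeasurableSpace Ω] (P : Measure Ω) [IsProbabilityMeasure P]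
    (Fstar : Ω → ℝ)
    (hest : ENNReal.ofReal (1 - α) ≤
      P {ω | |Fstar ω - (1 - ((H * ρ).trace).re / Δ)| ≤ ε})
    (hF : (star v ⬝ᵥ (ρ *ᵥ v)).re ≥
      F_T + ((1 - F_T) * (1 - Δ / opNorm H) + 2 * ε * Δ / opNorm H)) :
    ENNReal.ofReal (1 - α) ≤ P {ω | Fstar ω ≥ F_T + ε} := by
  set K := opNorm H with hKdef
  have hK : 0 < K := lt_of_lt_of_le hΔ hnorm
  set F := (star v ⬝ᵥ (ρ *ᵥ v)).re with hFdef
  set T := ((H * ρ).trace).re with hTdef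
  -- Step A: T ≤ K * (1 - F)
  have h0 : 0 ≤ (((((K : ℂ) • (1 - Matrix.vecMulVec v (star v)) - H)) * ρ).trace).re :=
    trace_re_nonneg_of_quad _ ρ hρ (quadN_nonneg H hH.1 v hv hground)
  have hexp : ((((K : ℂ) • (1 - Matrix.vecMulVec v (star v)) - H)) * ρ).trace
      = (K : ℂ) * (1 - star v ⬝ᵥ (ρ *ᵥ v)) - (H * ρ).trace := by
    rw [Matrix.sub_mul, Matrix.smul_mul, Matrix.sub_mul, Matrix.one_mul,
      Matrix.trace_sub, Matrix.trace_smul, Matrix.trace_sub, hρtr,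
      trace_vecMulVec_mul, smul_eq_mul]
  rw [hexp] at h0
  have hT : T ≤ K * (1 - F) := by
    have : ((K : ℂ) * (1 - star v ⬝ᵥ (ρ *ᵥ v)) - (H * ρ).trace).re
        = K * (1 - F) - T := by
      simp [Complex.sub_re, Complex.mul_re, hFdef, hTdef]
    linarith [this ▸ h0]
  -- Step B: F_T + 2ε ≤ 1 - T/Δ
  have e1 : K * ((1 - F_T) * (1 - Δ / K)) = (1 - F_T) * (K - Δ) := by
    field_simp
  have e2 : K * (2 * ε * Δ / K) = 2 * ε * Δ := by
    field_simp
  have hTbound : T ≤ Δ * (1 - F_T) - 2 * ε * Δ := by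
    nlinarith [hF, hT, hK, mul_le_mul_of_nonneg_left hF (le_of_lt hK)]
  have hFmin : F_T + 2 * ε ≤ 1 - T / Δ := by
    have hdiv : T / Δ ≤ 1 - F_T - 2 * ε := by
      rw [div_le_iff₀ hΔ]
      nlinarith
    linarith
  -- Step C: measure monotonicity
  refine le_trans hest (measure_mono ?_)
  intro ω hω
  simp only [Set.mem_setOf_eq] at hω ⊢
  have habs := abs_le.mp hω
  have h1 : (1 : ℝ) - T / Δ - ε ≤ Fstar ω := by linarith [habs.1]
  linarith
end

section
/- Let H be a Hermitian d×d complex matrix, Δ > 0, and v a unit vector in ℂ^d such that H v = 0 and ⟨w, H w⟩ ≥ Δ‖w‖² for every vector w orthogonal to v. Fix a threshold fidelity F_T, an estimation error ε > 0 and a failure probability α ∈ (0,1). Let ρ be a density matrix on ℂ^d with fidelity F = ⟨v, ρ v⟩, let F_min = 1 − Tr[Hρ]/Δ, and let F* : Ω → ℝ be a random variable on a probability space (Ω, P) satisfying P[|F* − F_min| ≤ ε] ≥ 1 − α. If F < F_T, then P[F* < F_T + ε] ≥ 1 − α, i.e., the test that rejects when F* < F_T + ε rejects ρ with probability at least 1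 − α. (Soundness of the certification protocol.) -/
open Matrix MeasureTheory
open scoped ComplexOrder

lemma aux_gap {d : ℕ} (H : Matrix (Fin d) (Fin d) ℂ)
    (hH : H.IsHermitian) (Δ : ℝ) (v : Fin d → ℂ)
    (hv : star v ⬝ᵥ v = 1) (hground : H *ᵥ v = 0)
    (hgap : ∀ w : Fin d → ℂ, star v ⬝ᵥ w = 0 →
      Δ * (star w ⬝ᵥ w).re ≤ (star w ⬝ᵥ (H *ᵥ w)).re)
    (w : Fin d → ℂ) :
    Δ * ((star w ⬝ᵥ w).re - Complex.normSq (star v ⬝ᵥ w)) ≤ (star w ⬝ᵥ (H *ᵥ w)).re := by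
  set c := star v ⬝ᵥ w with hc
  set w' := w - c • v with hw'
  have hvH : star v ⬝ᵥ (H *ᵥ w) = 0 := by
    rw [Matrix.dotProduct_mulVec]
    have : star v ᵥ* H = 0 := by
      have := Matrix.star_mulVec (M := Hᴴ) (v := v)
      rw [Matrix.conjTranspose_conjTranspose] at this
      rw [← this, hH.eq, hground]
      simp
    rw [this]; simp
  have horth : star v ⬝ᵥ w' = 0 := by
    simp [hw', dotProduct_sub, dotProduct_smul, hv, hc, smul_eq_mul]
  have h1 : star w' ⬝ᵥ (H *ᵥ w') = star w ⬝ᵥ (H *ᵥ w) - star c * (star v ⬝ᵥ (H *ᵥ w)) := by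
    have hHw' : H *ᵥ w' = H *ᵥ w := by
      simp [hw', Matrix.mulVec_sub, Matrix.mulVec_smul, hground]
    rw [hHw', hw']
    simp [sub_dotProduct, smul_dotProduct]
  have h2 : (star w' ⬝ᵥ w').re = (star w ⬝ᵥ w).re - Complex.normSq c := by
    have hwv : star w ⬝ᵥ v = star c := by
      rw [hc, ← Matrix.star_dotProduct]
    have : star w' ⬝ᵥ w' = star w ⬝ᵥ w - star c * c := by
      rw [hw']
      simp [sub_dotProduct, dotProduct_sub, smul_dotProduct, dotProduct_smul, hv, hwv, hc,
        smul_eq_mul]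
    rw [this]
    simp [Complex.normSq_apply, Complex.mul_re]
  have := hgap w' horth
  rw [h1, hvH, h2] at this
  simpa using this

lemma key_trace {d : ℕ} (H : Matrix (Fin d) (Fin d) ℂ) (B : Matrix (Fin d) (Fin d) ℂ) :
    (H * (Bᴴ * B)).trace = ∑ i, star (star (B i)) ⬝ᵥ (H *ᵥ star (B i)) := by
  rw [← Matrix.mul_assoc, Matrix.trace_mul_cycle, Matrix.trace]
  refine Finset.sum_congr rfl fun i _ => ?_
  simp only [Matrix.diag_apply, Matrix.mul_apply, Matrix.conjTranspose_apply,
    Matrix.mulVec, dotProduct, Pi.star_apply, star_star, Finset.mul_sum, Finset.sum_mul]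
  rw [Finset.sum_comm]
  refine Finset.sum_congr rfl fun k _ => Finset.sum_congr rfl fun j _ => ?_
  ring

lemma key_tr2 {d : ℕ} (B : Matrix (Fin d) (Fin d) ℂ) :
    (Bᴴ * B).trace = ∑ i, star (star (B i)) ⬝ᵥ (star (B i)) := by
  rw [Matrix.trace_mul_comm, Matrix.trace]
  refine Finset.sum_congr rfl fun i _ => ?_
  simp [Matrix.mul_apply, dotProduct, mul_comm]

lemma key_fid {d : ℕ} (B : Matrix (Fin d) (Fin d) ℂ) (v : Fin d → ℂ) :
    (star v ⬝ᵥ ((Bᴴ * B) *ᵥ v)).re = ∑ i, Complex.normSq (star v ⬝ᵥ star (B i)) := by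
  have h1 : star v ⬝ᵥ ((Bᴴ * B) *ᵥ v) = star (B *ᵥ v) ⬝ᵥ (B *ᵥ v) := by
    rw [← Matrix.mulVec_mulVec, Matrix.dotProduct_mulVec, ← Matrix.star_mulVec]
  rw [h1]
  have h2 : ∀ i, star v ⬝ᵥ star (B i) = star ((B *ᵥ v) i) := by
    intro i
    simp [dotProduct, Matrix.mulVec, mul_comm]
  simp only [h2]
  have h3 : ∀ z : ℂ, Complex.normSq (star z) = Complex.normSq z := fun z => by
    simp [Complex.star_def, Complex.normSq_conj]
  simp only [h3, dotProduct, Pi.star_apply, Complex.re_sum]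
  refine Finset.sum_congr rfl fun i _ => ?_
  simp [Complex.star_def, mul_comm, Complex.mul_conj]


/-- Soundness of the certification protocol. If the random estimate `F*`
of `F_min = 1 - Tr[Hρ]/Δ` satisfies `P[|F* - F_min| ≤ ε] ≥ 1 - α`, and the fidelity
`F = ⟨v, ρ v⟩` of `ρ` with the unique ground state `v` of the Hermitian Hamiltonian `H`
(gap `≥ Δ`) satisfies `F < F_T`, then the test rejects with probability at least
`1 - α`: `P[F* < F_T + ε] ≥ 1 - α`. -/
theorem certification_soundness {d : ℕ} (H : Matrix (Fin d) (Fin d) ℂ)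
    (hH : H.IsHermitian) (Δ : ℝ) (hΔ : 0 < Δ) (v : Fin d → ℂ)
    (hv : star v ⬝ᵥ v = 1) (hground : H *ᵥ v = 0)
    (hgap : ∀ w : Fin d → ℂ, star v ⬝ᵥ w = 0 →
      Δ * (star w ⬝ᵥ w).re ≤ (star w ⬝ᵥ (H *ᵥ w)).re)
    (F_T ε α : ℝ) (hε : 0 < ε) (hα : α ∈ Set.Ioo (0 : ℝ) 1)
    (ρ : Matrix (Fin d) (Fin d) ℂ) (hρ : ρ.PosSemidef) (hρtr : ρ.trace = 1)
    {Ω : Type*} [MeasurableSpace Ω] (P : Measure Ω) [IsProbabilityMeasure P]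
    (Fstar : Ω → ℝ)
    (hest : ENNReal.ofReal (1 - α) ≤
      P {ω | |Fstar ω - (1 - ((H * ρ).trace).re / Δ)| ≤ ε})
    (hF : (star v ⬝ᵥ (ρ *ᵥ v)).re < F_T) :
    ENNReal.ofReal (1 - α) ≤ P {ω | Fstar ω < F_T + ε} := by
  have hFmin : 1 - ((H * ρ).trace).re / Δ ≤ (star v ⬝ᵥ (ρ *ᵥ v)).re := by
    obtain ⟨B, hB⟩ : ∃ B : Matrix (Fin d) (Fin d) ℂ, ρ = Bᴴ * B := by
      open MatrixOrder in exact CStarAlgebra.nonneg_iff_eq_star_mul_self.mp hρ.nonneg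
    subst hB
    have hT : ((H * (Bᴴ * B)).trace).re
        = ∑ i, (star (star (B i)) ⬝ᵥ (H *ᵥ star (B i))).re := by
      rw [key_trace]; simp [Complex.re_sum]
    have h1 : (∑ i, (star (star (B i)) ⬝ᵥ (star (B i))).re) = 1 := by
      have h := congrArg Complex.re (key_tr2 B ▸ hρtr)
      simpa [Complex.re_sum] using h
    have hF' := key_fid B v
    have hsum' : Δ * (1 - (star v ⬝ᵥ ((Bᴴ * B) *ᵥ v)).re) ≤ ((H * (Bᴴ * B)).trace).re := by
      rw [hT, hF', ← h1, ← Finset.sum_sub_distrib, Finset.mul_sum]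
      exact Finset.sum_le_sum fun i _ =>
        aux_gap H hH Δ v hv hground hgap (star (B i))
    have hdiv : 1 - (star v ⬝ᵥ ((Bᴴ * B) *ᵥ v)).re ≤ ((H * (Bᴴ * B)).trace).re / Δ := by
      rw [le_div_iff₀ hΔ]
      linarith [hsum']
    linarith
  refine le_trans hest (measure_mono ?_)
  intro ω hω
  simp only [Set.mem_setOf_eq] at hω ⊢
  have := abs_le.mp hω
  linarith [this.2]
end

section
/- Let ρ₀ and ρ be density matrices on ℂ^d, let Π be a d×d complex matrix that is an orthogonal projection (Π = Π† and Π² = Π), and let a = Tr[Πρ₀] and b = Tr[Πρ]. Assume a ≥ c for some constant c > 0 and b > 0. Then the trace-norm distance between the post-measurement states satisfies ‖ Πρ₀Π/a − ΠρΠ/b ‖₁ ≤ (2/c) ‖ρ₀ − ρ‖₁, where ‖A‖₁ = Tr[√(A†A)] denotes the trace norm. -/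
open Matrix
open scoped ComplexOrder

/-- The positive semidefinite square root of a positive semidefinite matrix
(the definition Mathlib had in December 2024, since removed). -/
noncomputable def Matrix.PosSemidef.sqrt {n 𝕜 : Type*} [Fintype n] [DecidableEq n] [RCLike 𝕜]
    {A : Matrix n n 𝕜} (hA : A.PosSemidef) : Matrix n n 𝕜 :=
  (hA.1.eigenvectorUnitary : Matrix n n 𝕜) * diagonal ((RCLike.ofReal : ℝ → 𝕜) ∘ (√·) ∘ hA.1.eigenvalues) *
    (star hA.1.eigenvectorUnitary : Matrix n n 𝕜)

lemma Matrix.PosSemidef.sqrt_eq_cfc {n 𝕜 : Type*} [Fintype n] [DecidableEq n] [RCLike 𝕜]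
    {A : Matrix n n 𝕜} (hA : A.PosSemidef) : hA.sqrt = cfc Real.sqrt A := by
  rw [hA.1.cfc_eq]
  simp only [IsHermitian.cfc, Matrix.PosSemidef.sqrt, Unitary.conjStarAlgAut_apply]

lemma Matrix.PosSemidef.eq_sqrt_of_sq_eq {n 𝕜 : Type*} [Fintype n] [DecidableEq n] [RCLike 𝕜]
    {B : Matrix n n 𝕜} (hB : B.PosSemidef) {A : Matrix n n 𝕜} (hA : A.PosSemidef)
    (h : B ^ 2 = A) : B = hA.sqrt := by
  have hBsa : IsSelfAdjoint B := hB.1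
  rw [hA.sqrt_eq_cfc, ← h, ← cfc_pow_id (R := ℝ) B 2 hBsa, ← cfc_comp' (R := ℝ) Real.sqrt (fun x => x ^ 2) B]
  conv_lhs => rw [← cfc_id' ℝ B]
  refine cfc_congr fun x hx => ?_
  rw [hB.1.spectrum_real_eq_range_eigenvalues] at hx
  obtain ⟨i, rfl⟩ := hx
  exact (Real.sqrt_sq (hB.eigenvalues_nonneg i)).symm

/-- The trace norm `‖A‖₁ = Tr √(A†A)` of a complex matrix. -/
noncomputable def traceNorm {d : ℕ} (A : Matrix (Fin d) (Fin d) ℂ) : ℝ :=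
  (((Matrix.posSemidef_conjTranspose_mul_self A).sqrt).trace).re

namespace PMaux

variable {d : ℕ}

/-- Contraction predicate. -/
def Contr (P : Matrix (Fin d) (Fin d) ℂ) : Prop :=
  ∀ x : Fin d → ℂ, star (P *ᵥ x) ⬝ᵥ (P *ᵥ x) ≤ star x ⬝ᵥ x

lemma quad_eq (P : Matrix (Fin d) (Fin d) ℂ) (x : Fin d → ℂ) :
    star (P *ᵥ x) ⬝ᵥ (P *ᵥ x) = star x ⬝ᵥ ((Pᴴ * P) *ᵥ x) := by
  rw [star_mulVec, dotProduct_mulVec, vecMul_vecMul, dotProduct_mulVec]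

lemma contr_of_psd {P : Matrix (Fin d) (Fin d) ℂ}
    (h : (1 - Pᴴ * P).PosSemidef) : Contr P := by
  intro x
  have := h.dotProduct_mulVec_nonneg x
  rw [sub_mulVec, dotProduct_sub, one_mulVec, sub_nonneg] at this
  rw [quad_eq]
  exact this

lemma contr_mul {P Q : Matrix (Fin d) (Fin d) ℂ} (hP : Contr P) (hQ : Contr Q) :
    Contr (P * Q) := by
  intro x
  rw [← mulVec_mulVec]
  exact (hP (Q *ᵥ x)).trans (hQ x)

lemma contr_proj {P : Matrix (Fin d) (Fin d) ℂ} (hH : P.IsHermitian) (hP : P * P = P) :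
    Contr P := by
  apply contr_of_psd
  have h1 : (1 - P)ᴴ * (1 - P) = 1 - Pᴴ * P := by
    simp [sub_mul, mul_sub, hH.eq, hP]
  rw [← h1]
  exact posSemidef_conjTranspose_mul_self _

end PMaux

namespace PMaux

variable {d : ℕ} {A : Matrix (Fin d) (Fin d) ℂ}

/-- Conjugation of a real diagonal by the eigenvector unitary of `A`. -/
noncomputable def conjU (hA : A.IsHermitian) (f : Fin d → ℝ) : Matrix (Fin d) (Fin d) ℂ :=
  (hA.eigenvectorUnitary : Matrix (Fin d) (Fin d) ℂ) * diagonal (RCLike.ofReal ∘ f) *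
    star (hA.eigenvectorUnitary : Matrix (Fin d) (Fin d) ℂ)

lemma star_mul_self_U (hA : A.IsHermitian) :
    star (hA.eigenvectorUnitary : Matrix (Fin d) (Fin d) ℂ) *
      (hA.eigenvectorUnitary : Matrix (Fin d) (Fin d) ℂ) = 1 :=
  Unitary.coe_star_mul_self _

lemma self_mul_star_U (hA : A.IsHermitian) :
    (hA.eigenvectorUnitary : Matrix (Fin d) (Fin d) ℂ) *
      star (hA.eigenvectorUnitary : Matrix (Fin d) (Fin d) ℂ) = 1 :=
  Unitary.coe_mul_star_self _

lemma conjU_mul (hA : A.IsHermitian) (f g : Fin d → ℝ) :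
    conjU hA f * conjU hA g = conjU hA (f * g) := by
  unfold conjU
  set U := (hA.eigenvectorUnitary : Matrix (Fin d) (Fin d) ℂ)
  have h1 : U * diagonal (RCLike.ofReal ∘ f) * star U * (U * diagonal (RCLike.ofReal ∘ g) * star U)
      = U * (diagonal (RCLike.ofReal ∘ f) * (star U * U) * diagonal (RCLike.ofReal ∘ g)) * star U := by
    simp only [mul_assoc]
  have h2 : (RCLike.ofReal ∘ f : Fin d → ℂ) * (RCLike.ofReal ∘ g) = RCLike.ofReal ∘ (f * g) := by
    funext i; simp
  rw [h1, star_mul_self_U hA, mul_one, diagonal_mul_diagonal, ← h2]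
  rfl

lemma conjU_spectral (hA : A.IsHermitian) : A = conjU hA hA.eigenvalues := hA.spectral_theorem

lemma conjU_conjTranspose (hA : A.IsHermitian) (f : Fin d → ℝ) :
    (conjU hA f)ᴴ = conjU hA f := by
  unfold conjU
  rw [conjTranspose_mul, conjTranspose_mul, diagonal_conjTranspose, ← star_eq_conjTranspose,
    ← star_eq_conjTranspose, star_star]
  have : star (RCLike.ofReal ∘ f : Fin d → ℂ) = RCLike.ofReal ∘ f := by
    ext i; simp [Function.comp]
  rw [this, mul_assoc]

lemma conjU_trace (hA : A.IsHermitian) (f : Fin d → ℝ) :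
    (conjU hA f).trace = ∑ i, (f i : ℂ) := by
  unfold conjU
  rw [trace_mul_cycle, star_mul_self_U hA, one_mul, trace_diagonal]
  simp

lemma conjU_one (hA : A.IsHermitian) : conjU hA 1 = 1 := by
  unfold conjU
  have h : (RCLike.ofReal ∘ (1 : Fin d → ℝ) : Fin d → ℂ) = fun _ => 1 := by funext i; simp
  rw [h, diagonal_one, mul_one, self_mul_star_U hA]

lemma conjU_posSemidef (hA : A.IsHermitian) {f : Fin d → ℝ} (hf : ∀ i, 0 ≤ f i) :
    (conjU hA f).PosSemidef := by
  have hd : (Matrix.diagonal (RCLike.ofReal ∘ f : Fin d → ℂ)).PosSemidef := by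
    apply PosSemidef.diagonal
    intro i
    simp only [Function.comp_apply, Pi.zero_apply]
    exact Complex.zero_le_real.mpr (hf i)
  have := hd.mul_mul_conjTranspose_same (hA.eigenvectorUnitary : Matrix (Fin d) (Fin d) ℂ)
  rwa [← star_eq_conjTranspose] at this

/-- trace norm of a Hermitian matrix is the sum of absolute values of eigenvalues. -/
lemma traceNorm_hermitian (hA : A.IsHermitian) :
    traceNorm A = ∑ i, |hA.eigenvalues i| := by
  have hS : (conjU hA (fun i => |hA.eigenvalues i|)).PosSemidef :=
    conjU_posSemidef hA (fun i => abs_nonneg _)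
  have h2 : conjU hA (hA.eigenvalues * hA.eigenvalues) = A * A := by
    rw [← conjU_mul, ← conjU_spectral hA]
  have hfun : ((fun i => |hA.eigenvalues i|) * fun i => |hA.eigenvalues i|)
      = hA.eigenvalues * hA.eigenvalues := funext fun i => abs_mul_abs_self _
  have hsq : conjU hA (fun i => |hA.eigenvalues i|) ^ 2 = Aᴴ * A := by
    rw [hA.eq, pow_two, conjU_mul, hfun]; exact h2
  have := (hS.eq_sqrt_of_sq_eq (posSemidef_conjTranspose_mul_self A) hsq)
  rw [traceNorm, ← this, conjU_trace hA]
  rw [Complex.re_sum]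
  simp

end PMaux

namespace PMaux

variable {d : ℕ} {A : Matrix (Fin d) (Fin d) ℂ}

lemma exists_contr_attained (hA : A.IsHermitian) :
    ∃ P : Matrix (Fin d) (Fin d) ℂ, Contr P ∧ ((P * A).trace).re = traceNorm A := by
  set s : Fin d → ℝ := fun i => if hA.eigenvalues i < 0 then -1 else 1 with hs
  have hss : s * s = 1 := by
    funext i
    by_cases h : hA.eigenvalues i < 0 <;> simp [hs, h]
  refine ⟨conjU hA s, ?_, ?_⟩
  · apply contr_of_psd
    have : (conjU hA s)ᴴ * conjU hA s = 1 := by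
      rw [conjU_conjTranspose, conjU_mul, hss, conjU_one]
    rw [this, sub_self]
    exact PosSemidef.zero
  · have h1 : conjU hA s * A = conjU hA (s * hA.eigenvalues) := by
      rw [← conjU_mul]
      exact congrArg (fun B => conjU hA s * B) (conjU_spectral hA)
    rw [h1, conjU_trace, traceNorm_hermitian hA, Complex.re_sum]
    apply Finset.sum_congr rfl
    intro i _
    simp only [Complex.ofReal_re, Pi.mul_apply]
    by_cases h : hA.eigenvalues i < 0
    · simp [hs, h, abs_of_neg h]
    · simp [hs, h, abs_of_nonneg (not_lt.mp h)]

lemma abs_re_trace_le (hA : A.IsHermitian) {P : Matrix (Fin d) (Fin d) ℂ} (hP : Contr P) :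
    |((P * A).trace).re| ≤ traceNorm A := by
  set U := (hA.eigenvectorUnitary : Matrix (Fin d) (Fin d) ℂ) with hU
  set lam := hA.eigenvalues with hlam
  set M := star U * P * U with hM
  -- entry bound
  have entry : ∀ i, ‖M i i‖ ≤ 1 := by
    intro i
    set u : Fin d → ℂ := ⇑(hA.eigenvectorBasis i) with hu
    have hMi : M i i = star u ⬝ᵥ (P *ᵥ u) := by
      simp only [hM, Matrix.mul_apply, Matrix.mulVec, dotProduct, Matrix.star_apply,
        Finset.sum_mul, Finset.mul_sum, hu, hU, IsHermitian.eigenvectorUnitary_apply,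
        Pi.star_apply, RCLike.star_def]
      rw [Finset.sum_comm]
      refine Finset.sum_congr rfl fun x _ => Finset.sum_congr rfl fun y _ => by ring
    set u' : EuclideanSpace ℂ (Fin d) := hA.eigenvectorBasis i with hu'
    set v : EuclideanSpace ℂ (Fin d) := (WithLp.equiv 2 (Fin d → ℂ)).symm (P *ᵥ u) with hv
    have hinner : inner ℂ u' v = star u ⬝ᵥ (P *ᵥ u) := by
      rw [PiLp.inner_apply, dotProduct]
      refine Finset.sum_congr rfl fun j _ => ?_
      rw [RCLike.inner_apply, mul_comm]
      rfl
    have hnu : ‖u'‖ = 1 := hA.eigenvectorBasis.orthonormal.1 i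
    have hre := (Complex.le_def.mp (hP u)).1
    have hvv : (star (P *ᵥ u) ⬝ᵥ (P *ᵥ u)).re = ‖v‖ ^ 2 := by
      rw [show star (P *ᵥ u) ⬝ᵥ (P *ᵥ u) = inner ℂ v v from (by rw [PiLp.inner_apply, dotProduct]; refine Finset.sum_congr rfl fun j _ => ?_; rw [RCLike.inner_apply, mul_comm]; rfl), ← RCLike.re_to_complex]
      exact inner_self_eq_norm_sq (𝕜 := ℂ) v
    have huu : (star u ⬝ᵥ u).re = ‖u'‖ ^ 2 := by
      rw [show star u ⬝ᵥ u = inner ℂ u' u' from (by rw [PiLp.inner_apply, dotProduct]; refine Finset.sum_congr rfl fun j _ => ?_; rw [RCLike.inner_apply, mul_comm]; rfl), ← RCLike.re_to_complex]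
      exact inner_self_eq_norm_sq (𝕜 := ℂ) u'
    rw [hvv, huu, hnu] at hre
    have hnv : ‖v‖ ≤ 1 := by nlinarith [norm_nonneg v]
    calc ‖M i i‖ = ‖inner ℂ u' v‖ := by
          rw [hMi, ← hinner]
      _ ≤ ‖u'‖ * ‖v‖ := norm_inner_le_norm _ _
      _ ≤ 1 := by rw [hnu, one_mul]; exact hnv
  -- trace rewrite
  have htr : (P * A).trace = ∑ i, M i i * (lam i : ℂ) := by
    have h1 : P * A = P * U * (diagonal (RCLike.ofReal ∘ lam)) * star U := by
      rw [conjU_spectral hA]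
      simp only [conjU, hU, hlam, mul_assoc]
    rw [h1, trace_mul_cycle]
    simp only [Matrix.trace, Matrix.mul_diagonal, Matrix.diag, hM, trace_diagonal, Function.comp]
    exact Finset.sum_congr rfl fun x _ => by rw [← Matrix.mul_assoc]; rfl
  rw [htr, traceNorm_hermitian hA, Complex.re_sum]
  calc |∑ i, (M i i * (lam i : ℂ)).re| ≤ ∑ i, |(M i i * (lam i : ℂ)).re| :=
        Finset.abs_sum_le_sum_abs _ _
    _ ≤ ∑ i, |lam i| := by
        apply Finset.sum_le_sum
        intro i _
        have h1 : |(M i i * (lam i : ℂ)).re| ≤ ‖M i i * (lam i : ℂ)‖ :=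
          Complex.abs_re_le_norm _
        rw [norm_mul, Complex.norm_real, Real.norm_eq_abs] at h1
        calc |(M i i * (lam i : ℂ)).re| ≤ ‖M i i‖ * |lam i| := h1
          _ ≤ 1 * |lam i| := by
              apply mul_le_mul_of_nonneg_right (entry i) (abs_nonneg _)
          _ = |lam i| := one_mul _

end PMaux

namespace PMaux

variable {d : ℕ}

lemma traceNorm_psd {B : Matrix (Fin d) (Fin d) ℂ} (hB : B.PosSemidef) :
    traceNorm B = (B.trace).re := by
  have hsq : B ^ 2 = Bᴴ * B := by rw [pow_two, hB.1.eq]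
  have := hB.eq_sqrt_of_sq_eq (posSemidef_conjTranspose_mul_self B) hsq
  rw [traceNorm, ← this]

lemma traceNorm_nonneg' {B : Matrix (Fin d) (Fin d) ℂ} (hB : B.IsHermitian) :
    0 ≤ traceNorm B := by
  rw [traceNorm_hermitian hB]
  positivity

end PMaux

open PMaux

/-- Stability of post-measurement states. For density matrices `ρ₀, ρ`,
an orthogonal projection `Π`, and `a = Tr[Πρ₀] ≥ c > 0`, `b = Tr[Πρ] > 0`, the
post-measurement states satisfy `‖Πρ₀Π/a - ΠρΠ/b‖₁ ≤ (2/c)‖ρ₀ - ρ‖₁`. -/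
theorem post_measurement_trace_distance {d : ℕ}
    (ρ₀ ρ Pi : Matrix (Fin d) (Fin d) ℂ)
    (hρ₀ : ρ₀.PosSemidef) (hρ₀tr : ρ₀.trace = 1)
    (hρ : ρ.PosSemidef) (hρtr : ρ.trace = 1)
    (hPiH : Pi.IsHermitian) (hPi : Pi * Pi = Pi)
    (c : ℝ) (hc : 0 < c)
    (a b : ℝ) (ha : a = ((Pi * ρ₀).trace).re) (hb : b = ((Pi * ρ).trace).re)
    (hac : c ≤ a) (hbpos : 0 < b) :
    traceNorm (a⁻¹ • (Pi * ρ₀ * Pi) - b⁻¹ • (Pi * ρ * Pi)) ≤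
      (2 / c) * traceNorm (ρ₀ - ρ) := by
  have ha0 : 0 < a := hc.trans_le hac
  set Δ : Matrix (Fin d) (Fin d) ℂ := ρ₀ - ρ with hΔdef
  have hΔ : Δ.IsHermitian := hρ₀.1.sub hρ.1
  set T : ℝ := traceNorm Δ with hT
  have hT0 : 0 ≤ T := traceNorm_nonneg' hΔ
  -- PSD/Hermitian facts
  have hPρ₀ : (Pi * ρ₀ * Pi).PosSemidef := by
    have := hρ₀.mul_mul_conjTranspose_same Pi
    rwa [hPiH.eq] at this
  have hPρ : (Pi * ρ * Pi).PosSemidef := by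
    have := hρ.mul_mul_conjTranspose_same Pi
    rwa [hPiH.eq] at this
  set X : Matrix (Fin d) (Fin d) ℂ := a⁻¹ • (Pi * ρ₀ * Pi) - b⁻¹ • (Pi * ρ * Pi) with hXdef
  have hX : X.IsHermitian := by
    simp only [hXdef, Matrix.IsHermitian, conjTranspose_sub, conjTranspose_smul,
      star_trivial, hPρ₀.1.eq, hPρ.1.eq]
  have hPic : Contr Pi := contr_proj hPiH hPi
  obtain ⟨P₀, hP₀c, hP₀tr⟩ := exists_contr_attained hX
  -- decomposition of X
  have hXdecomp : X = a⁻¹ • (Pi * Δ * Pi) + (a⁻¹ - b⁻¹) • (Pi * ρ * Pi) := by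
    rw [hXdef, hΔdef]
    rw [Matrix.mul_sub, Matrix.sub_mul, smul_sub, sub_smul]
    abel
  set t1 : ℝ := ((P₀ * (Pi * Δ * Pi)).trace).re with ht1
  set t2 : ℝ := ((P₀ * (Pi * ρ * Pi)).trace).re with ht2
  have E : traceNorm X = a⁻¹ * t1 + (a⁻¹ - b⁻¹) * t2 := by
    rw [← hP₀tr, hXdecomp, mul_add, Matrix.mul_smul, Matrix.mul_smul, trace_add,
      trace_smul, trace_smul, Complex.add_re]
    rw [Complex.real_smul, Complex.real_smul, Complex.re_ofReal_mul, Complex.re_ofReal_mul]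
  -- bound t1
  have h1 : |t1| ≤ T := by
    have hcyc : (P₀ * (Pi * Δ * Pi)).trace = ((Pi * P₀ * Pi) * Δ).trace := by
      have e1 : P₀ * (Pi * Δ * Pi) = (P₀ * Pi) * Δ * Pi := by noncomm_ring
      have e2 : Pi * (P₀ * Pi) * Δ = (Pi * P₀ * Pi) * Δ := by noncomm_ring
      rw [e1, trace_mul_cycle, e2]
    rw [ht1, hcyc]
    exact abs_re_trace_le hΔ (contr_mul (contr_mul hPic hP₀c) hPic)
  -- bound t2
  have htrb : ((Pi * ρ * Pi).trace).re = b := by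
    rw [trace_mul_comm, ← Matrix.mul_assoc, hPi, hb]
  have h2 : |t2| ≤ b := by
    have := abs_re_trace_le hPρ.1 hP₀c
    rwa [traceNorm_psd hPρ, htrb] at this
  -- bound |a - b|
  have h3 : |a - b| ≤ T := by
    have hab : a - b = ((Pi * Δ).trace).re := by
      rw [hΔdef, Matrix.mul_sub, trace_sub, Complex.sub_re, ha, hb]
    rw [hab]
    exact abs_re_trace_le hΔ hPic
  -- assemble
  rw [E]
  have step1 : a⁻¹ * t1 ≤ a⁻¹ * T :=
    mul_le_mul_of_nonneg_left ((le_abs_self t1).trans h1) (inv_nonneg.mpr ha0.le)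
  have step2 : (a⁻¹ - b⁻¹) * t2 ≤ |a - b| / a := by
    calc (a⁻¹ - b⁻¹) * t2 ≤ |(a⁻¹ - b⁻¹) * t2| := le_abs_self _
      _ = |a⁻¹ - b⁻¹| * |t2| := abs_mul _ _
      _ ≤ |a⁻¹ - b⁻¹| * b := mul_le_mul_of_nonneg_left h2 (abs_nonneg _)
      _ = |a - b| / a := by
          rw [show a⁻¹ - b⁻¹ = (b - a) / (a * b) by field_simp]
          rw [abs_div, abs_of_pos (mul_pos ha0 hbpos), abs_sub_comm]
          field_simp
  have step3 : |a - b| / a ≤ a⁻¹ * T := by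
    rw [inv_mul_eq_div]
    exact (div_le_div_iff_of_pos_right ha0).mpr h3
  calc a⁻¹ * t1 + (a⁻¹ - b⁻¹) * t2 ≤ a⁻¹ * T + a⁻¹ * T :=
        add_le_add step1 (step2.trans step3)
    _ = 2 * T / a := by ring
    _ ≤ 2 * T / c := by
        rw [div_le_div_iff₀ ha0 hc]
        nlinarith
    _ = 2 / c * T := by ring
end
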